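/- Let N ≥ 3 and N' = N/(N−1). Let ψ : [0,∞) → ℝ be continuous with ψ(0) = 0, ψ(r) > 0 for r > 0, and such that ψ(r) ≥ r and r·ψ'(r) ≥ ψ(r) for all r > 0 (with ψ differentiable on (0,∞)); define J(ϱ) = ( ψ( (N ϱ/ω_N)^{1/N} ) / (N ϱ/ω_N)^{1/N} )^{N−1} for ϱ > 0. Let φ : (0,∞) → [0,∞) be nonincreasing and locally absolutely continuous with lim_{ϱ→∞} φ(ϱ) = 0 and ∫₀^∞ φ'(ϱ)² ϱ^{2/N'} J(ϱ) dϱ < ∞. Then lim_{ϱ→∞} φ(ϱ)² · ϱ^{1−2/N} · J(ϱ) = 0. -/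

import Mathlib

open MeasureTheory

/-- Surface area of the unit sphere `S^{N-1} ⊂ ℝ^N`. -/
noncomputable def omegaN (N : ℕ) : ℝ :=
  2 * Real.pi ^ ((N : ℝ) / 2) / Real.Gamma ((N : ℝ) / 2)

/-- The Jacobian distortion factor `J(ϱ) = (ψ(r)/r)^{N-1}` with `r = (Nϱ/ω_N)^{1/N}`. -/
noncomputable def Jfun (N : ℕ) (ψ : ℝ → ℝ) (t : ℝ) : ℝ :=
  if t = 0 then 1 else
    (ψ (((N : ℝ) * t / omegaN N) ^ ((1:ℝ) / (N : ℝ))) /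
      (((N : ℝ) * t / omegaN N) ^ ((1:ℝ) / (N : ℝ)))) ^ (N - 1)

/-- The Hölder conjugate `N' = N/(N-1)`. -/
noncomputable def Nprime (N : ℕ) : ℝ := (N : ℝ) / ((N : ℝ) - 1)

lemma sq_le_of_forall_lam (c e A : ℝ) (hc : 0 ≤ c) (he : 0 ≤ e) (hA : 0 ≤ A)
    (h : ∀ l : ℝ, 0 < l → c ≤ e / (2 * l) + l * A / 2) : c ^ 2 ≤ e * A := by
  by_contra hcon
  push_neg at hcon
  have hc0 : 0 < c := by nlinarith
  rcases eq_or_lt_of_le hA with hA0 | hA0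
  · rcases eq_or_lt_of_le he with he0 | he0
    · have := h 1 one_pos
      rw [← hA0, ← he0] at this
      norm_num at this
      linarith
    · have := h (e / c) (by positivity)
      rw [← hA0] at this
      have h2 : e / (2 * (e / c)) = c / 2 := by
        rw [div_eq_div_iff (by positivity) (by norm_num)]
        field_simp
      rw [h2] at this
      nlinarith
  · have := h (c / A) (by positivity)
    have h1 : e / (2 * (c / A)) = e * A / (2 * c) := by
      rw [div_eq_div_iff (by positivity) (by positivity)]
      field_simp
    have h2 : c / A * A / 2 = c / 2 := by field_simp
    rw [h1, h2] at this
    have h3 : c / 2 ≤ e * A / (2 * c) := by linarith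
    have h4 := (le_div_iff₀ (by positivity : (0:ℝ) < 2 * c)).1 h3
    nlinarith

lemma omegaN_pos (N : ℕ) (hN : 3 ≤ N) : 0 < omegaN N := by
  have h2 : (0:ℝ) < (N:ℝ) / 2 := by
    have : (3:ℝ) ≤ N := by exact_mod_cast hN
    linarith
  have := Real.Gamma_pos_of_pos h2
  have := Real.rpow_pos_of_pos Real.pi_pos ((N:ℝ)/2)
  unfold omegaN
  positivity

lemma ratio_mono (ψ : ℝ → ℝ) (hψc : Continuous ψ)
    (hdiff : ∀ r : ℝ, 0 < r → DifferentiableAt ℝ ψ r)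
    (hlog : ∀ r : ℝ, 0 < r → ψ r ≤ r * deriv ψ r) :
    MonotoneOn (fun r => ψ r / r) (Set.Ioi 0) := by
  apply monotoneOn_of_deriv_nonneg (convex_Ioi 0)
  · exact hψc.continuousOn.div continuousOn_id fun x hx => ne_of_gt hx
  · rw [interior_Ioi]
    exact fun r hr =>
      ((hdiff r hr).div differentiableAt_id (ne_of_gt hr)).differentiableWithinAt
  · rw [interior_Ioi]
    intro r hr
    have hd := ((hdiff r hr).hasDerivAt).div (hasDerivAt_id r) (ne_of_gt hr)
    simp only [id_eq] at hd
    rw [(show HasDerivAt (fun r => ψ r / r) _ r from hd).deriv]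
    apply div_nonneg
    · have h := hlog r hr
      nlinarith [h]
    · positivity

/-- Boundary decay at infinity:
`φ(ϱ)² ϱ^{1-2/N} J(ϱ) → 0` as `ϱ → ∞`. -/
theorem stmt_11 (N : ℕ) (hN : 3 ≤ N) (ψ : ℝ → ℝ)
    (hψc : Continuous ψ) (h0 : ψ 0 = 0)
    (hpos : ∀ r : ℝ, 0 < r → 0 < ψ r)
    (hdiff : ∀ r : ℝ, 0 < r → DifferentiableAt ℝ ψ r)
    (hgeq : ∀ r : ℝ, 0 < r → r ≤ ψ r)
    (hlog : ∀ r : ℝ, 0 < r → ψ r ≤ r * deriv ψ r)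
    (φ : ℝ → ℝ) (hφ0 : ∀ ϱ : ℝ, 0 < ϱ → 0 ≤ φ ϱ)
    (hanti : AntitoneOn φ (Set.Ioi 0))
    (hac : ∀ a b : ℝ, 0 < a → a ≤ b → φ b - φ a = ∫ t in a..b, deriv φ t)
    (hlim : Filter.Tendsto φ Filter.atTop (nhds 0))
    (hfin : IntegrableOn
      (fun ϱ => (deriv φ ϱ) ^ 2 * ϱ ^ ((2:ℝ) / Nprime N) * Jfun N ψ ϱ)
      (Set.Ioi 0)) :
    Filter.Tendsto
      (fun ϱ : ℝ => (φ ϱ) ^ 2 * ϱ ^ ((1:ℝ) - 2 / (N : ℝ)) * Jfun N ψ ϱ)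
      Filter.atTop (nhds 0) := by
  have hN3 : (3:ℝ) ≤ (N:ℝ) := by exact_mod_cast hN
  have hNpos : (0:ℝ) < N := by linarith
  set p : ℝ := (2:ℝ) / Nprime N with hpdef
  have hp : p = 2 - 2 / (N:ℝ) := by
    rw [hpdef]
    unfold Nprime
    rw [div_div_eq_mul_div, div_eq_iff (ne_of_gt hNpos), sub_mul,
      div_mul_cancel₀ _ (ne_of_gt hNpos)]
    ring
  have hp1 : 1 < p := by
    have h2N : 2 / (N:ℝ) ≤ 2/3 := by
      rw [div_le_div_iff₀ hNpos (by norm_num : (0:ℝ) < 3)]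
      linarith
    rw [hp]; linarith
  clear_value p
  have hω := omegaN_pos N hN
  have hrpos : ∀ t : ℝ, 0 < t → 0 < ((N:ℝ) * t / omegaN N) ^ ((1:ℝ)/(N:ℝ)) := by
    intro t ht
    apply Real.rpow_pos_of_pos
    positivity
  have hJ1 : ∀ t : ℝ, 0 < t → 1 ≤ Jfun N ψ t := by
    intro t ht
    simp only [Jfun, if_neg (ne_of_gt ht)]
    have hr0 : 0 < ((N:ℝ) * t / omegaN N) ^ ((1:ℝ)/(N:ℝ)) := hrpos t ht
    have h1 : 1 ≤ ψ (((N:ℝ) * t / omegaN N) ^ ((1:ℝ)/(N:ℝ))) /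
        (((N:ℝ) * t / omegaN N) ^ ((1:ℝ)/(N:ℝ))) :=
      (one_le_div hr0).2 (hgeq _ hr0)
    calc (1:ℝ) = 1 ^ (N-1) := (one_pow _).symm
      _ ≤ _ := pow_le_pow_left₀ zero_le_one h1 _
  have hJmono : ∀ s t : ℝ, 0 < s → s ≤ t → Jfun N ψ s ≤ Jfun N ψ t := by
    intro s t hs hst
    have ht : 0 < t := lt_of_lt_of_le hs hst
    simp only [Jfun, if_neg (ne_of_gt hs), if_neg (ne_of_gt ht)]
    have hrs : 0 < ((N:ℝ) * s / omegaN N) ^ ((1:ℝ)/(N:ℝ)) := hrpos s hs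
    have hrt : 0 < ((N:ℝ) * t / omegaN N) ^ ((1:ℝ)/(N:ℝ)) := hrpos t ht
    have hle : ((N:ℝ) * s / omegaN N) ^ ((1:ℝ)/(N:ℝ))
        ≤ ((N:ℝ) * t / omegaN N) ^ ((1:ℝ)/(N:ℝ)) := by
      apply Real.rpow_le_rpow (by positivity) _ (by positivity)
      gcongr
    apply pow_le_pow_left₀ (div_nonneg (hpos _ hrs).le hrs.le)
    exact ratio_mono ψ hψc hdiff hlog (Set.mem_Ioi.2 hrs) (Set.mem_Ioi.2 hrt) hle
  set g : ℝ → ℝ := fun t => (deriv φ t) ^ 2 * t ^ p * Jfun N ψ t with hgdef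
  have hgnon : ∀ t : ℝ, 0 < t → 0 ≤ g t := by
    intro t ht
    have h1 := hJ1 t ht
    have h2 : (0:ℝ) < t ^ p := Real.rpow_pos_of_pos ht p
    have : (0:ℝ) < Jfun N ψ t := lt_of_lt_of_le one_pos h1
    positivity
  set ε : ℝ → ℝ := fun x => ∫ t in Set.Ioi x, g t with hεdef
  have hεnon : ∀ x : ℝ, 0 < x → 0 ≤ ε x := by
    intro x hx
    exact setIntegral_nonneg measurableSet_Ioi fun t ht => hgnon t (lt_trans hx ht)
  have hεlim : Filter.Tendsto ε Filter.atTop (nhds 0) := by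
    have hI := MeasureTheory.intervalIntegral_tendsto_integral_Ioi 0 hfin Filter.tendsto_id
    have heq : (fun x => (∫ t in Set.Ioi (0:ℝ), g t) - ∫ t in (0:ℝ)..x, g t)
        =ᶠ[Filter.atTop] ε := by
      filter_upwards [Filter.eventually_gt_atTop 0] with x hx
      have hsplit : (∫ t in Set.Ioi (0:ℝ), g t)
          = (∫ t in Set.Ioc 0 x, g t) + ∫ t in Set.Ioi x, g t := by
        rw [← Set.Ioc_union_Ioi_eq_Ioi hx.le]
        exact setIntegral_union (Set.Ioc_disjoint_Ioi le_rfl) measurableSet_Ioi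
          (hfin.mono_set Set.Ioc_subset_Ioi_self) (hfin.mono_set (Set.Ioi_subset_Ioi hx.le))
      rw [intervalIntegral.integral_of_le hx.le, hsplit]
      simp [hεdef]
    have h2 : Filter.Tendsto
        (fun x => (∫ t in Set.Ioi (0:ℝ), g t) - ∫ t in (0:ℝ)..x, g t)
        Filter.atTop (nhds ((∫ t in Set.Ioi (0:ℝ), g t) - ∫ t in Set.Ioi (0:ℝ), g t)) :=
      tendsto_const_nhds.sub hI
    rw [sub_self] at h2
    exact Filter.Tendsto.congr' heq h2
  have key : ∀ x : ℝ, 0 < x →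
      (φ x) ^ 2 ≤ ε x * (x ^ (1 - p) / ((p - 1) * Jfun N ψ x)) := by
    intro x hx
    have hJx : 0 < Jfun N ψ x := lt_of_lt_of_le one_pos (hJ1 x hx)
    have hA0 : 0 ≤ x ^ (1 - p) / ((p - 1) * Jfun N ψ x) := by
      have h3 : (0:ℝ) < x ^ (1-p) := Real.rpow_pos_of_pos hx _
      have h4 : (0:ℝ) < p - 1 := by linarith
      positivity
    apply sq_le_of_forall_lam _ _ _ (hφ0 x hx) (hεnon x hx) hA0
    intro l hl
    set B : ℝ → ℝ := fun t => g t * (2*l)⁻¹ + t ^ (-p) * (l * (2 * Jfun N ψ x)⁻¹) with hBdef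
    have hpne : -p < -1 := by linarith
    have hint1 : IntegrableOn (fun t => g t * (2*l)⁻¹) (Set.Ioi x) :=
      (hfin.mono_set (Set.Ioi_subset_Ioi hx.le)).mul_const _
    have hint2 : IntegrableOn (fun t : ℝ => t ^ (-p) * (l * (2 * Jfun N ψ x)⁻¹))
        (Set.Ioi x) := (integrableOn_Ioi_rpow_of_lt hpne hx).mul_const _
    have hBint : IntegrableOn B (Set.Ioi x) := hint1.add hint2
    have hBnon : ∀ t ∈ Set.Ioi x, 0 ≤ B t := by
      intro t ht
      have ht0 : 0 < t := lt_trans hx ht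
      have h1 := hgnon t ht0
      have h2 : (0:ℝ) < t ^ (-p) := Real.rpow_pos_of_pos ht0 _
      have h3 : (0:ℝ) < Jfun N ψ x := hJx
      positivity
    have hstep : ∀ b : ℝ, x ≤ b → φ x ≤ φ b + ∫ t in Set.Ioi x, B t := by
      intro b hxb
      have hIoc : (∫ t in x..b, B t) ≤ ∫ t in Set.Ioi x, B t := by
        rw [intervalIntegral.integral_of_le hxb]
        apply setIntegral_mono_set hBint
        · exact (ae_restrict_iff' measurableSet_Ioi).2 (Filter.Eventually.of_forall hBnon)
        · exact Filter.Eventually.of_forall Set.Ioc_subset_Ioi_self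
      have hfc := hac x b hx hxb
      by_cases hd : IntervalIntegrable (deriv φ) volume x b
      · have hBI : IntervalIntegrable B volume x b :=
          (intervalIntegrable_iff_integrableOn_Ioc_of_le hxb).2
            (hBint.mono_set Set.Ioc_subset_Ioi_self)
        have hmono : (∫ t in x..b, -(deriv φ t)) ≤ ∫ t in x..b, B t := by
          apply intervalIntegral.integral_mono_on hxb hd.neg hBI
          intro t ht
          have ht0 : 0 < t := lt_of_lt_of_le hx ht.1
          have hJt : 0 < Jfun N ψ t := lt_of_lt_of_le one_pos (hJ1 t ht0)
          have htp : (0:ℝ) < t ^ p := Real.rpow_pos_of_pos ht0 p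
          have hw0 : 0 < t ^ p * Jfun N ψ t := mul_pos htp hJt
          have hamgm : -(deriv φ t)
              ≤ (deriv φ t) ^ 2 * (t ^ p * Jfun N ψ t) * (2*l)⁻¹
                + l * (2 * (t ^ p * Jfun N ψ t))⁻¹ := by
            have hl0 : l ≠ 0 := ne_of_gt hl
            have hw0' : t ^ p * Jfun N ψ t ≠ 0 := ne_of_gt hw0
            have hkey : (deriv φ t) ^ 2 * (t ^ p * Jfun N ψ t) * (2*l)⁻¹
                + l * (2 * (t ^ p * Jfun N ψ t))⁻¹ - (-(deriv φ t))
                = (deriv φ t * (t ^ p * Jfun N ψ t) + l) ^ 2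
                  / (2 * l * (t ^ p * Jfun N ψ t)) := by
              field_simp
              ring
            rw [← sub_nonneg, hkey]
            positivity
          have h2 : l * (2 * (t ^ p * Jfun N ψ t))⁻¹
              ≤ t ^ (-p) * (l * (2 * Jfun N ψ x)⁻¹) := by
            rw [Real.rpow_neg ht0.le]
            rw [show (t ^ p)⁻¹ * (l * (2 * Jfun N ψ x)⁻¹)
                = l * (2 * (t ^ p * Jfun N ψ x))⁻¹ by
              rw [mul_inv, mul_inv]
              ring]
            apply mul_le_mul_of_nonneg_left _ hl.le
            apply inv_anti₀ (by positivity)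
            have := hJmono x t hx ht.1
            have h4 : t ^ p * Jfun N ψ x ≤ t ^ p * Jfun N ψ t :=
              mul_le_mul_of_nonneg_left this htp.le
            linarith
          have hgt : g t = (deriv φ t) ^ 2 * (t ^ p * Jfun N ψ t) := by
            rw [hgdef]; ring
          calc -(deriv φ t) ≤ _ := hamgm
            _ ≤ B t := by
              rw [hBdef]
              simp only []
              rw [hgt]
              exact add_le_add_right h2 _
        rw [intervalIntegral.integral_neg] at hmono
        linarith
      · rw [intervalIntegral.integral_undef hd] at hfc
        have h0 : 0 ≤ ∫ t in Set.Ioi x, B t := setIntegral_nonneg measurableSet_Ioi hBnon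
        linarith
    have hφle : φ x ≤ ∫ t in Set.Ioi x, B t := by
      have ht : Filter.Tendsto (fun b => φ b + ∫ t in Set.Ioi x, B t) Filter.atTop
          (nhds (0 + ∫ t in Set.Ioi x, B t)) := hlim.add_const _
      rw [zero_add] at ht
      exact ge_of_tendsto ht ((Filter.eventually_ge_atTop x).mono hstep)
    have hval : (∫ t in Set.Ioi x, B t)
        = ε x / (2 * l) + l * (x ^ (1-p) / ((p-1) * Jfun N ψ x)) / 2 := by
      rw [hBdef]
      rw [MeasureTheory.integral_add hint1 hint2]
      rw [MeasureTheory.integral_mul_const, MeasureTheory.integral_mul_const]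
      rw [integral_Ioi_rpow_of_lt hpne hx]
      rw [show -p + 1 = 1 - p by ring]
      have hrf : (∫ (a : ℝ) in Set.Ioi x, g a) = ε x := rfl
      rw [hrf]
      have hj : Jfun N ψ x ≠ 0 := ne_of_gt hJx
      have hp0 : p - 1 ≠ 0 := by intro h; rw [sub_eq_zero] at h; linarith
      have h1p : 1 - p ≠ 0 := by intro h; rw [sub_eq_zero] at h; linarith
      have hl0 : l ≠ 0 := ne_of_gt hl
      field_simp
      ring
    rw [hval] at hφle
    exact hφle
  have hexp : (1:ℝ) - 2/(N:ℝ) = p - 1 := by rw [hp]; ring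
  rw [hexp]
  apply squeeze_zero' (g := fun x => ε x / (p-1))
  · filter_upwards [Filter.eventually_gt_atTop 0] with x hx
    have h1 := hφ0 x hx
    have h2 : (0:ℝ) < Jfun N ψ x := lt_of_lt_of_le one_pos (hJ1 x hx)
    have h3 : (0:ℝ) < x ^ (p-1) := Real.rpow_pos_of_pos hx _
    positivity
  · filter_upwards [Filter.eventually_gt_atTop 0] with x hx
    have hk := key x hx
    have hJx : 0 < Jfun N ψ x := lt_of_lt_of_le one_pos (hJ1 x hx)
    have hxp : (0:ℝ) < x ^ (p-1) := Real.rpow_pos_of_pos hx _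
    have h1 : (φ x) ^ 2 * x ^ (p-1) * Jfun N ψ x
        ≤ (ε x * (x ^ (1-p) / ((p-1) * Jfun N ψ x))) * x ^ (p-1) * Jfun N ψ x := by
      have := mul_le_mul_of_nonneg_right
        (mul_le_mul_of_nonneg_right hk hxp.le) hJx.le
      exact this
    have hxx : x ^ ((1:ℝ)-p) * x ^ (p-1) = 1 := by
      rw [← Real.rpow_add hx]
      norm_num
    have h2 : (ε x * (x ^ (1-p) / ((p-1) * Jfun N ψ x))) * x ^ (p-1) * Jfun N ψ x
        = ε x / (p-1) := by
      have hj : Jfun N ψ x ≠ 0 := ne_of_gt hJx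
      have hp0 : p - 1 ≠ 0 := by intro h; rw [sub_eq_zero] at h; linarith
      field_simp
      linear_combination (ε x) * hxx
    rw [h2] at h1
    exact h1
  · have := hεlim.div_const (p-1)
    simpa using this
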